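/- Let K be a field, m a natural number, and M an m×m matrix over K. Then in the ring K⟦t⟧ of formal power series over K, one has det(I − M·t) · (∑_{n∈ℕ} s(Mⁿ) tⁿ) = s(adj(I − M·t)), where the polynomials det(I − M·t) and s(adj(I − M·t)) in K[t] are regarded as power series. In particular, the power series ∑_{n∈ℕ} s(Mⁿ) tⁿ is rational: there exist polynomials p, q ∈ K[t] with q(0) = 1 and q · ∑_{n∈ℕ} s(Mⁿ) tⁿ = p in K⟦t⟧. -/

import Mathlib

open Polynomial Matrix

/-- The sum of all entries of a square matrix. -/
def matS {ι R : Type*} [Fintype ι] [CommRing R] (M : Matrix ι ι R) : R :=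
  ∑ i, ∑ j, M i j

theorem stmt0 {K : Type*} [Field K] (m : ℕ) (M : Matrix (Fin m) (Fin m) K) :
    ((((1 : Matrix (Fin m) (Fin m) K[X]) - (X : K[X]) • M.map C).det :
        PowerSeries K) *
      PowerSeries.mk (fun n => matS (M ^ n)) =
      ((matS (((1 : Matrix (Fin m) (Fin m) K[X]) - (X : K[X]) • M.map C).adjugate) :
        K[X]) : PowerSeries K)) ∧
    ∃ p q : K[X], q.eval 0 = 1 ∧
      (q : PowerSeries K) * PowerSeries.mk (fun n => matS (M ^ n)) = (p : PowerSeries K) := by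
  classical
  set A : Matrix (Fin m) (Fin m) K[X] := 1 - (X : K[X]) • M.map C with hA
  set N : Matrix (Fin m) (Fin m) (PowerSeries K) :=
    Matrix.of (fun i k => PowerSeries.mk fun n => (M ^ n) i k) with hN
  set B : Matrix (Fin m) (Fin m) (PowerSeries K) :=
    A.map Polynomial.coeToPowerSeries.ringHom with hB
  have key1 : B * N = 1 := by
    refine Matrix.ext fun i k => PowerSeries.ext fun n => ?_
    rw [Matrix.mul_apply, map_sum]
    cases n with
    | zero =>
      simp [hB, hA, hN, Matrix.map_apply, Matrix.sub_apply, Matrix.smul_apply,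
        Matrix.one_apply, smul_eq_mul, PowerSeries.coeff_mul, Finset.sum_ite_eq,
        Matrix.one_apply, apply_ite]
    | succ n =>
      have hcoeff : ∀ j, (PowerSeries.coeff (n+1))
          ((Polynomial.coeToPowerSeries.ringHom (A i j)) * N j k) =
          (if i = j then (M ^ (n+1)) j k else 0) - M i j * (M ^ n) j k := by
        intro j
        have : (Polynomial.coeToPowerSeries.ringHom (A i j) : PowerSeries K) =
            (if i = j then 1 else 0) - PowerSeries.X * PowerSeries.C (M i j) := by
          simp [hA, Matrix.sub_apply, Matrix.smul_apply, Matrix.one_apply,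
            Matrix.map_apply, smul_eq_mul, apply_ite (fun p : K[X] => (p : PowerSeries K))]
          ring
        rw [this, sub_mul, map_sub, mul_assoc, PowerSeries.coeff_succ_X_mul,
          PowerSeries.coeff_C_mul]
        simp [hN, PowerSeries.coeff_mk, ite_mul, apply_ite]
      simp only [hB, Matrix.map_apply]
      rw [Finset.sum_congr rfl fun j _ => hcoeff j, Finset.sum_sub_distrib]
      simp [Finset.sum_ite_eq, hN, Matrix.one_apply, ← Matrix.mul_apply, ← pow_succ',
        apply_ite (fun p : PowerSeries K => PowerSeries.coeff (n+1) p)]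
  have key2 : B.adjugate = B.det • N := by
    calc B.adjugate = B.adjugate * (B * N) := by rw [key1, mul_one]
    _ = (B.adjugate * B) * N := by rw [mul_assoc]
    _ = B.det • N := by rw [Matrix.adjugate_mul, Matrix.smul_mul, Matrix.one_mul]
  have hdet : (A.det : PowerSeries K) = B.det := by
    rw [hB, ← RingHom.mapMatrix_apply, ← RingHom.map_det, Polynomial.coeToPowerSeries.ringHom_apply]
  have hadj : ((matS A.adjugate : K[X]) : PowerSeries K) = matS B.adjugate := by
    rw [hB, ← RingHom.mapMatrix_apply, ← RingHom.map_adjugate, RingHom.mapMatrix_apply]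
    simp only [matS, ← Polynomial.coeToPowerSeries.ringHom_apply, map_sum, Matrix.map_apply]
  have hsN : matS N = PowerSeries.mk (fun n => matS (M ^ n)) := by
    ext n
    simp [matS, hN, map_sum, PowerSeries.coeff_mk]
  have main : ((A.det : K[X]) : PowerSeries K) * PowerSeries.mk (fun n => matS (M ^ n)) =
      ((matS A.adjugate : K[X]) : PowerSeries K) := by
    rw [hdet, hadj, key2, ← hsN]
    simp [matS, Matrix.smul_apply, Finset.mul_sum, smul_eq_mul]
  refine ⟨main, matS A.adjugate, A.det, ?_, main⟩
  have h1 : (Polynomial.evalRingHom (0 : K)).mapMatrix A = 1 := by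
    ext i j
    simp [hA, Matrix.sub_apply, Matrix.smul_apply, Matrix.map_apply, Matrix.one_apply,
      smul_eq_mul, apply_ite (Polynomial.eval (0 : K))]
  have h2 := RingHom.map_det (Polynomial.evalRingHom (0 : K)) A
  rw [h1, Matrix.det_one] at h2
  simpa using h2
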